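/- (Proposition 2) Let E be a real Hilbert space, N(f) = f / ‖f‖ the normalization map, and L : E → ℝ differentiable at f̂ = f / ‖f‖ for some f ≠ 0. If the gradient g = ∇(L ∘ N)(f) is nonzero and the learning rate η is nonzero, then the SGD update strictly increases the norm of the embedding: ‖f − η • g‖ > ‖f‖. -/

import Mathlib

open RealInnerProductSpace Gradient

/-- Proposition 2 of the paper: for the loss composed with the normalization
map `N(f) = f / ‖f‖`, if the gradient `g = ∇(L ∘ N)(f)` is nonzero and the
learning rate `η` is nonzero, then the SGD update strictly increases the norm
of the embedding: `‖f − η • g‖ > ‖f‖`. -/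
theorem sgd_update_norm_strict_increase
    {E : Type*} [NormedAddCommGroup E] [InnerProductSpace ℝ E] [CompleteSpace E]
    (N : E → E) (hN : ∀ g : E, N g = ‖g‖⁻¹ • g)
    (L : E → ℝ) (f : E) (hf : f ≠ 0)
    (hL : DifferentiableAt ℝ L (‖f‖⁻¹ • f))
    (g : E) (hg : g = ∇ (L ∘ N) f) (hg0 : g ≠ 0)
    (η : ℝ) (hη : η ≠ 0) :
    ‖f‖ < ‖f - η • g‖ := by
  have hfn : ‖f‖ ≠ 0 := norm_ne_zero_iff.mpr hf
  -- N is differentiable at f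
  have hNdiff : DifferentiableAt ℝ N f := by
    have : DifferentiableAt ℝ (fun x : E => ‖x‖⁻¹ • x) f := by
      apply DifferentiableAt.smul
      · exact (differentiableAt_id.norm ℝ hf).inv hfn
      · exact differentiableAt_id
    exact this.congr_of_eventuallyEq (Filter.Eventually.of_forall hN)
  have hNf : N f = ‖f‖⁻¹ • f := hN f
  have hdiff : DifferentiableAt ℝ (L ∘ N) f := by
    have hL' := hL
    rw [← hNf] at hL'
    exact hL'.comp f hNdiff
  -- the composition t ↦ (L ∘ N) (t • f) is locally constant near 1
  have hkey : fderiv ℝ (L ∘ N) f f = 0 := by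
    have hφ : HasDerivAt (fun t : ℝ => t • f) f 1 := by
      simpa using (hasDerivAt_id (1 : ℝ)).smul_const f
    have hcomp : HasDerivAt (fun t : ℝ => (L ∘ N) (t • f)) (fderiv ℝ (L ∘ N) f f) 1 := by
      have hd1 : HasFDerivAt (L ∘ N) (fderiv ℝ (L ∘ N) f) ((1 : ℝ) • f) := by
        rw [one_smul]; exact hdiff.hasFDerivAt
      exact HasFDerivAt.comp_hasDerivAt (l := L ∘ N) (f := fun t : ℝ => t • f) 1 hd1 hφ
    have hconst : (fun t : ℝ => (L ∘ N) (t • f)) =ᶠ[nhds (1 : ℝ)]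
        (fun _ => (L ∘ N) f) := by
      filter_upwards [Ioi_mem_nhds (show (0 : ℝ) < 1 by norm_num)] with t ht
      have ht0 : (0 : ℝ) < t := ht
      simp only [Function.comp_apply, hN]
      congr 1
      rw [norm_smul, Real.norm_eq_abs, abs_of_pos ht0, mul_inv, smul_smul,
        mul_comm t⁻¹, mul_assoc, inv_mul_cancel₀ ht0.ne', mul_one]
    have hconst' : HasDerivAt (fun t : ℝ => (L ∘ N) (t • f)) 0 1 := by
      exact (hasDerivAt_const (1 : ℝ) ((L ∘ N) f)).congr_of_eventuallyEq hconst
    exact hcomp.unique hconst'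
  -- hence ⟪g, f⟫ = 0
  have horth : ⟪g, f⟫ = 0 := by
    rw [hg, gradient]
    rw [InnerProductSpace.toDual_symm_apply]
    exact hkey
  -- compute the norm
  have hsq : ‖f - η • g‖ ^ 2 = ‖f‖ ^ 2 + η ^ 2 * ‖g‖ ^ 2 := by
    rw [← real_inner_self_eq_norm_sq, ← real_inner_self_eq_norm_sq,
      ← real_inner_self_eq_norm_sq]
    rw [inner_sub_sub_self]
    rw [real_inner_smul_right, real_inner_smul_left, real_inner_smul_left,
      real_inner_smul_right, real_inner_comm g f, horth]
    ring
  have hpos : 0 < η ^ 2 * ‖g‖ ^ 2 := by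
    have h1 : 0 < η ^ 2 := by nlinarith [abs_pos.mpr hη, sq_abs η]
    have h2 : 0 < ‖g‖ ^ 2 := by nlinarith [norm_pos_iff.mpr hg0]
    exact mul_pos h1 h2
  have : ‖f‖ ^ 2 < ‖f - η • g‖ ^ 2 := by rw [hsq]; linarith
  nlinarith [norm_nonneg (f - η • g), norm_nonneg f]
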